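/- Let m ∈ ℕ (m ≥ 1), [a,b] ⊂ ℝ, 0 < α < 1, n ∈ ℕ with n^{1−α} > 2 and ⌈na⌉ ≤ ⌊nb⌋, and let j ∈ ℕ, j ≥ 1. Then for every x ∈ [a,b], |∑_{k=⌈na⌉}^{⌊nb⌋} Φ(nx − k)(k/n − x)^j| ≤ 1/n^{αj} + (b−a)^j/(4m(n^{1−α} − 2)^{2m}). -/

import Mathlib

open scoped BigOperators
open Real Filter

/-- The algebraic sigmoid function `φ(x) = x / (1 + x^(2m))^(1/(2m))`. -/
noncomputable def phi (m : ℕ) (x : ℝ) : ℝ :=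
  x / (1 + x ^ (2 * m)) ^ ((1 : ℝ) / (2 * m))

/-- The activation function `Φ(x) = (φ(x+1) - φ(x-1))/4`. -/
noncomputable def Phi (m : ℕ) (x : ℝ) : ℝ :=
  (phi m (x + 1) - phi m (x - 1)) / 4


lemma base_pos (m : ℕ) (x : ℝ) : (0:ℝ) < 1 + x ^ (2 * m) := by
  have : (0:ℝ) ≤ x ^ (2*m) := (even_two_mul m).pow_nonneg x
  linarith

lemma den_pos (m : ℕ) (x : ℝ) : (0:ℝ) < (1 + x ^ (2 * m)) ^ ((1 : ℝ) / (2 * m)) :=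
  Real.rpow_pos_of_pos (base_pos m x) _

lemma den_pow (m : ℕ) (hm : 1 ≤ m) (x : ℝ) :
    ((1 + x ^ (2 * m)) ^ ((1 : ℝ) / (2 * m))) ^ (2 * m) = 1 + x ^ (2 * m) := by
  have h := base_pos m x
  rw [← Real.rpow_natCast ((1 + x ^ (2 * m)) ^ ((1 : ℝ) / (2 * m))) (2*m),
    ← Real.rpow_mul h.le]
  have h2 : ((1:ℝ) / (2 * m)) * ((2*m : ℕ) : ℝ) = 1 := by
    have : ((m:ℝ)) ≠ 0 := Nat.cast_ne_zero.mpr (by omega)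
    push_cast; field_simp
  rw [h2, Real.rpow_one]

lemma phi_odd (m : ℕ) (x : ℝ) : phi m (-x) = - phi m x := by
  unfold phi
  rw [Even.neg_pow (even_two_mul m), neg_div]

lemma phi_le_one (m : ℕ) (hm : 1 ≤ m) (x : ℝ) : phi m x ≤ 1 := by
  unfold phi
  rcases le_or_gt x 0 with hx | hx
  · exact le_trans (div_nonpos_of_nonpos_of_nonneg hx (den_pos m x).le) zero_le_one
  · rw [div_le_one (den_pos m x)]
    have h1 : x ^ (2*m) ≤ ((1 + x ^ (2 * m)) ^ ((1 : ℝ) / (2 * m))) ^ (2*m) := by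
      rw [den_pow m hm x]; linarith
    have := pow_le_pow_left₀ hx.le (le_refl x)
    exact le_of_pow_le_pow_left₀ (by omega) (den_pos m x).le h1

lemma neg_one_le_phi (m : ℕ) (hm : 1 ≤ m) (x : ℝ) : -1 ≤ phi m x := by
  have := phi_le_one m hm (-x)
  rw [phi_odd] at this; linarith

lemma phi_mono (m : ℕ) (hm : 1 ≤ m) : Monotone (phi m) := by
  have key : ∀ s t : ℝ, 0 ≤ s → s ≤ t → phi m s ≤ phi m t := by
    intro s t hs hst
    unfold phi
    rw [div_le_div_iff₀ (den_pos m s) (den_pos m t)]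
    have h1 : (0:ℝ) ≤ s * (1 + t ^ (2 * m)) ^ ((1 : ℝ) / (2 * m)) :=
      mul_nonneg hs (den_pos m t).le
    have h2 : (0:ℝ) ≤ t * (1 + s ^ (2 * m)) ^ ((1 : ℝ) / (2 * m)) :=
      mul_nonneg (hs.trans hst) (den_pos m s).le
    refine le_of_pow_le_pow_left₀ (n := 2*m) (by omega) h2 ?_
    rw [mul_pow, mul_pow, den_pow m hm, den_pow m hm]
    have h3 : s ^ (2*m) ≤ t ^ (2*m) := pow_le_pow_left₀ hs hst _
    nlinarith [pow_nonneg hs (2*m)]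
  intro s t hst
  rcases le_or_gt 0 s with hs | hs
  · exact key s t hs hst
  rcases le_or_gt 0 t with ht | ht
  · calc phi m s ≤ 0 := div_nonpos_of_nonpos_of_nonneg hs.le (den_pos m s).le
      _ ≤ phi m t := div_nonneg ht (den_pos m t).le
  · have := key (-t) (-s) (by linarith) (by linarith)
    rw [phi_odd, phi_odd] at this; linarith

lemma one_sub_phi (m : ℕ) (hm : 1 ≤ m) (t : ℝ) (ht : 0 < t) :
    1 - phi m t ≤ 1 / (2 * m * t ^ (2 * m)) := by
  set c := (1 + t ^ (2 * m)) ^ ((1 : ℝ) / (2 * m)) with hc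
  have hcpos := den_pos m t
  have hcpow := den_pow m hm t
  have htc : t ≤ c := by
    refine le_of_pow_le_pow_left₀ (n := 2*m) (by omega) hcpos.le ?_
    rw [hcpow]; linarith
  set d := c - t with hd
  have hd0 : 0 ≤ d := by linarith
  have hbern : 1 + (2*m : ℕ) * (d / t) ≤ (1 + d / t) ^ (2*m) :=
    one_add_mul_le_pow (by have := div_nonneg hd0 ht.le; linarith : (-2:ℝ) ≤ d / t) (2*m)
  have hdt : (1 + d/t) ^ (2*m) = (1 + t ^ (2*m)) / t ^ (2*m) := by
    have : 1 + d/t = c / t := by field_simp [hd]; linarith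
    rw [this, div_pow, hcpow]
  rw [hdt] at hbern
  have htp : (0:ℝ) < t ^ (2*m) := pow_pos ht _
  have hm0 : (0:ℝ) < (m:ℝ) := by exact_mod_cast Nat.pos_of_ne_zero (by omega)
  -- from hbern : 1 + 2m d/t ≤ (1 + t^2m)/t^2m = 1/t^2m + 1
  have key : (2*(m:ℝ)) * (d/t) ≤ 1 / t^(2*m) := by
    have h1 : (1 + t ^ (2*m)) / t ^ (2*m) = 1 / t^(2*m) + 1 := by field_simp
    rw [h1] at hbern
    push_cast at hbern
    linarith
  have hphi : 1 - phi m t = d / c := by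
    unfold phi; rw [← hc]; field_simp [hd]
    have hc0 : c ≠ 0 := hcpos.ne'
    rw [hd, sub_div, div_self hc0]
  rw [hphi]
  have h2 : d / c ≤ d / t := by gcongr
  have key' : 2*(m:ℝ)*d*t^(2*m) ≤ t := by
    have h7 : 2*(m:ℝ)*(d/t)*t^(2*m) ≤ 1 := by
      have h8 := mul_le_mul_of_nonneg_right key htp.le
      rwa [one_div, inv_mul_cancel₀ htp.ne'] at h8
    have h9 := mul_le_mul_of_nonneg_right h7 ht.le
    have e1 : 2*(m:ℝ)*d*t^(2*m) = 2*(m:ℝ)*(d/t)*t^(2*m)*t := by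
      field_simp
    rw [e1]; linarith
  have h3 : d / t ≤ 1 / (2 * m * t ^ (2 * m)) := by
    rw [div_le_div_iff₀ ht (by positivity)]
    nlinarith [key']
  linarith

lemma Phi_nonneg (m : ℕ) (hm : 1 ≤ m) (x : ℝ) : 0 ≤ Phi m x := by
  have := phi_mono m hm (show x - 1 ≤ x + 1 by linarith)
  unfold Phi; linarith

lemma tele (m : ℕ) (y : ℝ) (K M : ℤ) (h : K ≤ M) :
    ∑ k ∈ Finset.Icc K M, Phi m (y - (k:ℝ)) =
      (phi m (y - K + 1) + phi m (y - K) - phi m (y - M) - phi m (y - M - 1)) / 4 := by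
  refine Int.le_induction (motive := fun M _ => ∑ k ∈ Finset.Icc K M, Phi m (y - (k:ℝ)) =
      (phi m (y - K + 1) + phi m (y - K) - phi m (y - M) - phi m (y - M - 1)) / 4) ?_ ?_ M h
  · show _ = _
    rw [Finset.Icc_self, Finset.sum_singleton]
    unfold Phi
    ring
  · intro M hKM ih
    show _ = _
    change _ = _ at ih
    have hins : Finset.Icc K (M + 1) = insert (M + 1) (Finset.Icc K M) := by
      ext k; simp only [Finset.mem_Icc, Finset.mem_insert]; omega
    rw [hins, Finset.sum_insert (by simp [Finset.mem_Icc]), ih]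
    unfold Phi
    push_cast
    rw [show y - ((M:ℝ) + 1) + 1 = y - M by ring,
        show y - ((M:ℝ) + 1) - 1 = y - M - 1 - 1 by ring,
        show y - ((M:ℝ) + 1) = y - M - 1 by ring]
    ring

lemma sum_Phi_le_one (m : ℕ) (hm : 1 ≤ m) (y : ℝ) (S : Finset ℤ) :
    ∑ k ∈ S, Phi m (y - (k:ℝ)) ≤ 1 := by
  rcases S.eq_empty_or_nonempty with rfl | hS
  · simp
  have hsub : S ⊆ Finset.Icc (S.min' hS) (S.max' hS) := fun k hk =>
    Finset.mem_Icc.mpr ⟨S.min'_le k hk, S.le_max' k hk⟩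
  calc ∑ k ∈ S, Phi m (y - (k:ℝ))
      ≤ ∑ k ∈ Finset.Icc (S.min' hS) (S.max' hS), Phi m (y - (k:ℝ)) :=
        Finset.sum_le_sum_of_subset_of_nonneg hsub (fun k _ _ => Phi_nonneg m hm _)
    _ ≤ 1 := by
        rw [tele m y _ _ (S.min'_le _ (S.max'_mem hS))]
        have h1 := phi_le_one m hm (y - (S.min' hS : ℝ) + 1)
        have h2 := phi_le_one m hm (y - (S.min' hS : ℝ))
        have h3 := neg_one_le_phi m hm (y - (S.max' hS : ℝ))
        have h4 := neg_one_le_phi m hm (y - (S.max' hS : ℝ) - 1)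
        linarith

lemma sum_Phi_right (m : ℕ) (hm : 1 ≤ m) (y T : ℝ) (hT : 1 ≤ T) (S : Finset ℤ)
    (hS : ∀ k ∈ S, y + T ≤ (k:ℝ)) :
    ∑ k ∈ S, Phi m (y - (k:ℝ)) ≤ (1 - phi m (T - 1)) / 2 := by
  rcases S.eq_empty_or_nonempty with rfl | hS'
  · simp
    have := phi_le_one m hm (T - 1); linarith
  have hsub : S ⊆ Finset.Icc (S.min' hS') (S.max' hS') := fun k hk =>
    Finset.mem_Icc.mpr ⟨S.min'_le k hk, S.le_max' k hk⟩
  have hmin : y + T ≤ ((S.min' hS' : ℤ) : ℝ) := hS _ (S.min'_mem hS')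
  have hmax : y + T ≤ ((S.max' hS' : ℤ) : ℝ) := hS _ (S.max'_mem hS')
  calc ∑ k ∈ S, Phi m (y - (k:ℝ))
      ≤ ∑ k ∈ Finset.Icc (S.min' hS') (S.max' hS'), Phi m (y - (k:ℝ)) :=
        Finset.sum_le_sum_of_subset_of_nonneg hsub (fun k _ _ => Phi_nonneg m hm _)
    _ ≤ (1 - phi m (T - 1)) / 2 := by
        rw [tele m y _ _ (S.min'_le _ (S.max'_mem hS'))]
        have h1 : phi m (y - (S.min' hS' : ℝ) + 1) ≤ - phi m (T - 1) := by
          rw [← phi_odd]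
          exact phi_mono m hm (by linarith)
        have h2 : phi m (y - (S.min' hS' : ℝ)) ≤ - phi m (T - 1) := by
          rw [← phi_odd]
          exact phi_mono m hm (by linarith)
        have h3 := neg_one_le_phi m hm (y - (S.max' hS' : ℝ))
        have h4 := neg_one_le_phi m hm (y - (S.max' hS' : ℝ) - 1)
        linarith

lemma sum_Phi_left (m : ℕ) (hm : 1 ≤ m) (y T : ℝ) (hT : 1 ≤ T) (S : Finset ℤ)
    (hS : ∀ k ∈ S, (k:ℝ) ≤ y - T) :
    ∑ k ∈ S, Phi m (y - (k:ℝ)) ≤ (1 - phi m (T - 1)) / 2 := by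
  rcases S.eq_empty_or_nonempty with rfl | hS'
  · simp
    have := phi_le_one m hm (T - 1); linarith
  have hsub : S ⊆ Finset.Icc (S.min' hS') (S.max' hS') := fun k hk =>
    Finset.mem_Icc.mpr ⟨S.min'_le k hk, S.le_max' k hk⟩
  have hmax : ((S.max' hS' : ℤ) : ℝ) ≤ y - T := hS _ (S.max'_mem hS')
  calc ∑ k ∈ S, Phi m (y - (k:ℝ))
      ≤ ∑ k ∈ Finset.Icc (S.min' hS') (S.max' hS'), Phi m (y - (k:ℝ)) :=
        Finset.sum_le_sum_of_subset_of_nonneg hsub (fun k _ _ => Phi_nonneg m hm _)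
    _ ≤ (1 - phi m (T - 1)) / 2 := by
        rw [tele m y _ _ (S.min'_le _ (S.max'_mem hS'))]
        have h1 := phi_le_one m hm (y - (S.min' hS' : ℝ) + 1)
        have h2 := phi_le_one m hm (y - (S.min' hS' : ℝ))
        have h3 : phi m (T - 1) ≤ phi m (y - (S.max' hS' : ℝ)) :=
          phi_mono m hm (by linarith)
        have h4 : phi m (T - 1) ≤ phi m (y - (S.max' hS' : ℝ) - 1) :=
          phi_mono m hm (by linarith)
        linarith

set_option maxHeartbeats 1000000 in
theorem An_moment_bound (m : ℕ) (hm : 1 ≤ m) (a b : ℝ) (hab : a ≤ b)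
    (α : ℝ) (hα0 : 0 < α) (hα1 : α < 1) (n : ℕ) (hn : 2 < (n : ℝ) ^ (1 - α))
    (hnab : ⌈(n : ℝ) * a⌉ ≤ ⌊(n : ℝ) * b⌋) (j : ℕ) (hj : 1 ≤ j)
    (x : ℝ) (hx : x ∈ Set.Icc a b) :
    |∑ k ∈ Finset.Icc ⌈(n : ℝ) * a⌉ ⌊(n : ℝ) * b⌋,
        Phi m ((n : ℝ) * x - (k : ℝ)) * ((k : ℝ) / n - x) ^ j| ≤
      1 / (n : ℝ) ^ (α * j) + (b - a) ^ j / (4 * m * ((n : ℝ) ^ (1 - α) - 2) ^ (2 * m)) := by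
  classical
  obtain ⟨hax, hxb⟩ := hx
  have hnpos : (0:ℝ) < n := by
    rcases Nat.eq_zero_or_pos n with h0 | h0
    · subst h0
      rw [Nat.cast_zero, Real.zero_rpow (by intro h; linarith)] at hn
      linarith
    · exact_mod_cast h0
  set y : ℝ := (n:ℝ) * x with hy
  set T : ℝ := (n:ℝ) ^ (1 - α) with hTdef
  have hT2 : 2 < T := hn
  set I : Finset ℤ := Finset.Icc ⌈(n : ℝ) * a⌉ ⌊(n : ℝ) * b⌋ with hI
  have hk_lo : ∀ k ∈ I, a ≤ (k:ℝ)/n := by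
    intro k hk
    rw [hI, Finset.mem_Icc] at hk
    have h1 : (n:ℝ) * a ≤ (k:ℝ) := le_trans (Int.le_ceil _) (by exact_mod_cast hk.1)
    rw [le_div_iff₀ hnpos]; linarith
  have hk_hi : ∀ k ∈ I, (k:ℝ)/n ≤ b := by
    intro k hk
    rw [hI, Finset.mem_Icc] at hk
    have h1 : (k:ℝ) ≤ (n:ℝ) * b := le_trans (by exact_mod_cast hk.2) (Int.floor_le _)
    rw [div_le_iff₀ hnpos]; linarith
  set F : ℤ → ℝ := fun k => Phi m (y - (k:ℝ)) * |(k:ℝ)/n - x| ^ j with hF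
  have hFnn : ∀ k, 0 ≤ F k := fun k =>
    mul_nonneg (Phi_nonneg m hm _) (pow_nonneg (abs_nonneg _) _)
  have habs : |∑ k ∈ I, Phi m (y - (k:ℝ)) * ((k:ℝ)/n - x) ^ j| ≤ ∑ k ∈ I, F k := by
    refine (Finset.abs_sum_le_sum_abs _ _).trans (Finset.sum_le_sum fun k _ => ?_)
    rw [abs_mul, abs_pow, abs_of_nonneg (Phi_nonneg m hm _)]
  set P : ℤ → Prop := fun k => |(k:ℝ) - y| ≤ T with hP
  set Q : ℤ → Prop := fun k => (k:ℝ) < y with hQ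
  have hsplit : ∑ k ∈ I, F k =
      (∑ k ∈ I.filter P, F k) +
      ((∑ k ∈ (I.filter fun k => ¬ P k).filter Q, F k) +
       (∑ k ∈ (I.filter fun k => ¬ P k).filter fun k => ¬ Q k, F k)) := by
    rw [Finset.sum_filter_add_sum_filter_not, Finset.sum_filter_add_sum_filter_not]
  -- near part
  have hnear : ∑ k ∈ I.filter P, F k ≤ 1 / (n:ℝ) ^ (α * j) := by
    have hTn : (0:ℝ) ≤ T / n := div_nonneg (by linarith) hnpos.le
    have step1 : ∑ k ∈ I.filter P, F k ≤ ∑ k ∈ I.filter P, Phi m (y - (k:ℝ)) * (T/n)^j := by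
      refine Finset.sum_le_sum fun k hk => ?_
      have hPk : |(k:ℝ) - y| ≤ T := (Finset.mem_filter.mp hk).2
      have hw : |(k:ℝ)/n - x| ≤ T/n := by
        have he : (k:ℝ)/n - x = ((k:ℝ) - y)/n := by
          rw [hy]; field_simp
        rw [he, abs_div, abs_of_pos hnpos]
        gcongr
      exact mul_le_mul_of_nonneg_left
        (pow_le_pow_left₀ (abs_nonneg _) hw j) (Phi_nonneg m hm _)
    have step2 : ∑ k ∈ I.filter P, Phi m (y - (k:ℝ)) * (T/n)^j ≤ (T/n)^j := by
      rw [← Finset.sum_mul]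
      calc (∑ k ∈ I.filter P, Phi m (y - (k:ℝ))) * (T/n)^j
          ≤ 1 * (T/n)^j := by
            exact mul_le_mul_of_nonneg_right (sum_Phi_le_one m hm y _) (pow_nonneg hTn _)
        _ = (T/n)^j := one_mul _
    have hrw : (T/n)^j = 1 / (n:ℝ) ^ (α * j) := by
      have h1 : T / (n:ℝ) = (n:ℝ) ^ (-α) := by
        have h0 : (n:ℝ) ^ ((1-α)-1) = (n:ℝ) ^ (1-α) / (n:ℝ) ^ (1:ℝ) := Real.rpow_sub hnpos _ _
        rw [Real.rpow_one] at h0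
        rw [hTdef, show (-α) = (1 - α) - 1 by ring, h0]
      rw [h1, ← Real.rpow_natCast ((n:ℝ) ^ (-α)) j, ← Real.rpow_mul hnpos.le,
        show (-α) * (j:ℝ) = -(α * j) by ring, Real.rpow_neg hnpos.le, one_div]
    calc ∑ k ∈ I.filter P, F k ≤ (T/n)^j := step1.trans step2
      _ = 1 / (n:ℝ) ^ (α * j) := hrw
  -- tail quantity
  have hT1pos : (0:ℝ) < T - 1 := by linarith
  have hE : (1 - phi m (T - 1)) / 2 ≤ 1 / (4 * m * (T - 1) ^ (2*m)) := by
    have h1 := one_sub_phi m hm (T - 1) hT1pos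
    have hmpos : (0:ℝ) < (m:ℝ) := by exact_mod_cast Nat.pos_of_ne_zero (by omega)
    have h3 : (1 - phi m (T-1))/2 ≤ (1/(2*(m:ℝ)*(T-1)^(2*m)))/2 := by linarith
    have h4 : (1/(2*(m:ℝ)*(T-1)^(2*m)))/2 = 1/(4*(m:ℝ)*(T-1)^(2*m)) := by
      rw [div_div]; congr 1; ring
    rw [h4] at h3; exact h3
  have hEnn : (0:ℝ) ≤ (1 - phi m (T - 1)) / 2 := by
    have := phi_le_one m hm (T - 1); linarith
  -- far left part
  have hfarL : ∑ k ∈ (I.filter fun k => ¬ P k).filter Q, F k ≤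
      ((1 - phi m (T - 1)) / 2) * (x - a)^j := by
    set S := (I.filter fun k => ¬ P k).filter Q with hS
    have hmemS : ∀ k ∈ S, (k:ℝ) ≤ y - T ∧ a ≤ (k:ℝ)/n := by
      intro k hk
      rw [hS, Finset.mem_filter, Finset.mem_filter] at hk
      obtain ⟨⟨hkI, hnP⟩, hQk⟩ := hk
      have h1 : T < |(k:ℝ) - y| := not_le.mp hnP
      rw [abs_of_nonpos (by simp only [hQ] at hQk; linarith)] at h1
      exact ⟨by linarith, hk_lo k hkI⟩
    have step1 : ∑ k ∈ S, F k ≤ ∑ k ∈ S, Phi m (y - (k:ℝ)) * (x - a)^j := by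
      refine Finset.sum_le_sum fun k hk => ?_
      obtain ⟨hky, hka⟩ := hmemS k hk
      have hkx : (k:ℝ)/n ≤ x := by
        rw [div_le_iff₀ hnpos]; rw [hy] at hky; nlinarith [hky, hT2]
      have hw : |(k:ℝ)/n - x| ≤ x - a := by
        rw [abs_of_nonpos (by linarith)]; linarith
      exact mul_le_mul_of_nonneg_left
        (pow_le_pow_left₀ (abs_nonneg _) hw j) (Phi_nonneg m hm _)
    rw [← Finset.sum_mul] at step1
    refine step1.trans ?_
    exact mul_le_mul_of_nonneg_right
      (sum_Phi_left m hm y T (by linarith) S fun k hk => (hmemS k hk).1)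
      (pow_nonneg (show (0:ℝ) ≤ x - a by linarith) j)
  -- far right part
  have hfarR : ∑ k ∈ (I.filter fun k => ¬ P k).filter (fun k => ¬ Q k), F k ≤
      ((1 - phi m (T - 1)) / 2) * (b - x)^j := by
    set S := (I.filter fun k => ¬ P k).filter (fun k => ¬ Q k) with hS
    have hmemS : ∀ k ∈ S, y + T ≤ (k:ℝ) ∧ (k:ℝ)/n ≤ b := by
      intro k hk
      rw [hS, Finset.mem_filter, Finset.mem_filter] at hk
      obtain ⟨⟨hkI, hnP⟩, hQk⟩ := hk
      have h1 : T < |(k:ℝ) - y| := not_le.mp hnP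
      simp only [hQ, not_lt] at hQk
      rw [abs_of_nonneg (by linarith)] at h1
      exact ⟨by linarith, hk_hi k hkI⟩
    have step1 : ∑ k ∈ S, F k ≤ ∑ k ∈ S, Phi m (y - (k:ℝ)) * (b - x)^j := by
      refine Finset.sum_le_sum fun k hk => ?_
      obtain ⟨hky, hkb⟩ := hmemS k hk
      have hkx : x ≤ (k:ℝ)/n := by
        rw [le_div_iff₀ hnpos]; rw [hy] at hky; nlinarith [hky, hT2]
      have hw : |(k:ℝ)/n - x| ≤ b - x := by
        rw [abs_of_nonneg (by linarith)]; linarith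
      exact mul_le_mul_of_nonneg_left
        (pow_le_pow_left₀ (abs_nonneg _) hw j) (Phi_nonneg m hm _)
    rw [← Finset.sum_mul] at step1
    refine step1.trans ?_
    exact mul_le_mul_of_nonneg_right
      (sum_Phi_right m hm y T (by linarith) S fun k hk => (hmemS k hk).1)
      (pow_nonneg (show (0:ℝ) ≤ b - x by linarith) j)
  -- combine far parts
  have hfar : ((1 - phi m (T - 1)) / 2) * (x - a)^j + ((1 - phi m (T - 1)) / 2) * (b - x)^j ≤
      (b - a)^j / (4 * m * (T - 2) ^ (2*m)) := by
    have hmpos : (0:ℝ) < (m:ℝ) := by exact_mod_cast Nat.pos_of_ne_zero (by omega)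
    have hsum : (x - a)^j + (b - x)^j ≤ (b - a)^j := by
      have := pow_add_pow_le (show (0:ℝ) ≤ x - a by linarith)
        (show (0:ℝ) ≤ b - x by linarith) (show j ≠ 0 by omega)
      rw [show x - a + (b - x) = b - a by ring] at this
      exact this
    have hED : (1 - phi m (T - 1)) / 2 ≤ 1 / (4 * m * (T - 2) ^ (2*m)) := by
      refine hE.trans ?_
      have hmpos2 : (0:ℝ) < (m:ℝ) := by exact_mod_cast Nat.pos_of_ne_zero (by omega)
      have h1 : (0:ℝ) < 4 * (m:ℝ) * (T - 2) ^ (2*m) :=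
        mul_pos (by linarith) (pow_pos (by linarith) _)
      have h2 : 4 * (m:ℝ) * (T - 2) ^ (2*m) ≤ 4 * m * (T - 1) ^ (2*m) :=
        mul_le_mul_of_nonneg_left
          (pow_le_pow_left₀ (show (0:ℝ) ≤ T - 2 by linarith)
            (show T - 2 ≤ T - 1 by linarith) (2*m))
          (by linarith)
      exact one_div_le_one_div_of_le h1 h2
    calc ((1 - phi m (T - 1)) / 2) * (x - a)^j + ((1 - phi m (T - 1)) / 2) * (b - x)^j
        = ((x - a)^j + (b - x)^j) * ((1 - phi m (T - 1)) / 2) := by ring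
      _ ≤ (b - a)^j * (1 / (4 * m * (T - 2) ^ (2*m))) := by
          exact mul_le_mul hsum hED hEnn (pow_nonneg (show (0:ℝ) ≤ b - a by linarith) j)
      _ = (b - a)^j / (4 * m * (T - 2) ^ (2*m)) := by ring
  refine habs.trans ?_
  rw [hsplit]
  exact add_le_add hnear ((add_le_add hfarL hfarR).trans hfar)
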